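/- The fixed point ξ_Mu of the substitution a→aca, c→d, d→c is not eventually periodic. -/

import Mathlib

/-- The alphabet `{a, c, d}`. -/
inductive ACD : Type
  | a | c | d
deriving DecidableEq

/-- The fixed point `ξ` of the substitution `a → aca`, `c → d`, `d → c`
beginning with `a` (indexed from 1; explicitly, if `n = 2^k * m` with `m` odd,
its `n`-th letter is `a` if `k = 0`, `c` if `k` is odd, and `d` if `k` is even
and positive) is not eventually periodic: it is not of the form `w · u^∞` for
finite words `w, u` with `u` nonempty. -/
theorem xiMu_not_eventually_periodic
    (ξ : ℕ → ACD)
    (h : ∀ k m : ℕ, Odd m →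
      ξ (2 ^ k * m) =
        if k = 0 then ACD.a else if Odd k then ACD.c else ACD.d) :
    ¬ ∃ w u : List ACD, u ≠ [] ∧ ∀ n : ℕ,
        ξ (n + 1) = if n < w.length then w.getD n ACD.a
          else u.getD ((n - w.length) % u.length) ACD.a := by
  rintro ⟨w, u, hu, hn⟩
  set L := w.length with hL
  set p := u.length with hp
  have hp0 : 0 < p := List.length_pos_iff.mpr hu
  -- eventual periodicity with period p
  have hper : ∀ n, L + 1 ≤ n → ξ n = ξ (n + p) := by
    intro n hn1
    obtain ⟨t, rfl⟩ : ∃ t, n = t + 1 := ⟨n - 1, by omega⟩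
    have ht : L ≤ t := by omega
    have e1 := hn t
    have e2 := hn (t + p)
    rw [if_neg (by omega)] at e1
    rw [if_neg (by omega)] at e2
    have e3 : t + 1 + p = t + p + 1 := by omega
    rw [e3, e1, e2]
    congr 1
    have e4 : t + p - L = (t - L) + p := by omega
    rw [e4, Nat.add_mod_right]
  obtain ⟨j, q, hq2, hpq⟩ :=
    Nat.exists_eq_pow_mul_and_not_dvd hp0.ne' 2 (by norm_num)
  have hq1 : q % 2 = 1 := by
    rcases Nat.mod_two_eq_zero_or_one q with h0 | h1
    · exact absurd (Nat.dvd_of_mod_eq_zero h0) hq2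
    · exact h1
  rcases Nat.eq_zero_or_pos j with hj | hj
  · -- p is odd
    have hp2 : p % 2 = 1 := by rw [hpq, hj]; simpa using hq1
    have h1 := h 0 (3 * p + 2 + 4 * L) (Nat.odd_iff.mpr (by omega))
    have h2 := h 1 (2 * p + 1 + 2 * L) (Nat.odd_iff.mpr (by omega))
    simp at h1
    norm_num at h2
    have hper' := hper (3 * p + 2 + 4 * L) (by omega)
    have e : 3 * p + 2 + 4 * L + p = 2 * (2 * p + 1 + 2 * L) := by ring
    rw [e, h2, h1] at hper'
    exact absurd hper' (by simp)
  · -- p = 2^j * q with j ≥ 1, q odd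
    have hj0 : j ≠ 0 := hj.ne'
    have h1 := h j (3 * q + 2 + 4 * L) (Nat.odd_iff.mpr (by omega))
    have h2 := h (j + 1) (2 * q + 1 + 2 * L) (Nat.odd_iff.mpr (by omega))
    rw [if_neg hj0] at h1
    rw [if_neg (Nat.succ_ne_zero j)] at h2
    have hge : L + 1 ≤ 2 ^ j * (3 * q + 2 + 4 * L) := by
      calc L + 1 ≤ 3 * q + 2 + 4 * L := by omega
        _ ≤ 2 ^ j * (3 * q + 2 + 4 * L) :=
          Nat.le_mul_of_pos_left _ (Nat.pow_pos (by norm_num))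
    have hper' := hper (2 ^ j * (3 * q + 2 + 4 * L)) hge
    have e : 2 ^ j * (3 * q + 2 + 4 * L) + p = 2 ^ (j + 1) * (2 * q + 1 + 2 * L) := by
      rw [hpq, pow_succ]; ring
    rw [e, h1, h2] at hper'
    have hodd : Odd (j + 1) ↔ ¬ Odd j := by
      rw [Nat.odd_add_one, Nat.not_odd_iff_even]
    rcases Nat.even_or_odd j with hje | hjo
    · rw [if_neg (Nat.not_odd_iff_even.mpr hje), if_pos (hodd.mpr (Nat.not_odd_iff_even.mpr hje))] at hper'
      exact absurd hper' (by simp)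
    · rw [if_pos hjo, if_neg (by rw [hodd]; exact not_not_intro hjo)] at hper'
      exact absurd hper' (by simp)
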